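/- If an order isomorphism U intertwines the semigroups T¹_t and T²_t, then T¹_t is irreducible if and only if T²_t is irreducible. -/

import Mathlib

open MeasureTheory
open scoped NNReal

/-- A set `A` is `T_t`-invariant if `1_A · T_t f = T_t (1_A f)` for all `f ∈ L²` and
all `t ≥ 0`. -/
def IsInvariantSet {E : Type*} [MeasurableSpace E] (m : Measure E)
    (T : ℝ≥0 → (Lp ℝ 2 m →L[ℝ] Lp ℝ 2 m)) (A : Set E) : Prop :=
  ∀ t : ℝ≥0, ∀ f g : Lp ℝ 2 m, (g : E → ℝ) =ᵐ[m] A.indicator f →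
    (T t g : E → ℝ) =ᵐ[m] A.indicator (T t f)

/-- A semigroup `(T_t)` is irreducible if every `T_t`-invariant set `A` satisfies
`m(A) = 0` or `m(Aᶜ) = 0`. -/
def IsIrreducibleSemigroup {E : Type*} [MeasurableSpace E] (m : Measure E)
    (T : ℝ≥0 → (Lp ℝ 2 m →L[ℝ] Lp ℝ 2 m)) : Prop :=
  ∀ A : Set E, MeasurableSet A → IsInvariantSet m T A → m A = 0 ∨ m Aᶜ = 0

/-- In a σ-finite measure space there is an a.e. strictly positive element of `L²`. -/
lemma exists_ae_pos_L2 {E : Type*} [MeasurableSpace E] (m : Measure E) [SigmaFinite m] :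
    ∃ f : Lp ℝ 2 m, ∀ᵐ x ∂m, 0 < f x := by
  obtain ⟨g, hgpos, hgmeas, hgint⟩ := exists_pos_lintegral_lt_of_sigmaFinite m one_ne_zero
  set h : E → ℝ := fun x => min (g x : ℝ) 1 with hhdef
  have hhm : Measurable h := (hgmeas.coe_nnreal_real).min measurable_const
  have hhpos : ∀ x, 0 < h x := fun x => lt_min (by exact_mod_cast hgpos x) one_pos
  have hhle1 : ∀ x, h x ≤ 1 := fun x => min_le_right _ _
  have hhleg : ∀ x, h x ≤ (g x : ℝ) := fun x => min_le_left _ _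
  have hgintR : Integrable (fun x => (g x : ℝ)) m := by
    refine ⟨hgmeas.coe_nnreal_real.aestronglyMeasurable, ?_⟩
    have : (∫⁻ x, ‖(g x : ℝ)‖₊ ∂m) < ⊤ := by
      simpa [NNReal.nnnorm_eq] using hgint.trans_le le_top
    simpa [HasFiniteIntegral] using this
  have hsq : Integrable (fun x => h x ^ 2) m := by
    refine Integrable.mono' hgintR ((hhm.pow_const 2).aestronglyMeasurable) ?_
    refine Filter.Eventually.of_forall fun x => ?_
    have h0 : 0 ≤ h x := (hhpos x).le
    have : h x ^ 2 ≤ h x := by nlinarith [hhle1 x]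
    rw [Real.norm_eq_abs, abs_of_nonneg (by positivity)]
    exact this.trans (hhleg x)
  have hmem : MemLp h 2 m := (memLp_two_iff_integrable_sq hhm.aestronglyMeasurable).2 hsq
  refine ⟨hmem.toLp h, ?_⟩
  filter_upwards [hmem.coeFn_toLp] with x hx
  rw [hx]
  exact hhpos x

private lemma abs_inf_zero {a b : ℝ} (h : |a| ⊓ |b| = 0) (hb : b ≠ 0) : a = 0 := by
  rcases le_total |a| |b| with hle | hle
  · rw [inf_eq_left.2 hle] at h; exact abs_eq_zero.1 h
  · rw [inf_eq_right.2 hle] at h; exact absurd (abs_eq_zero.1 h) hb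

/-- One direction of the transfer of irreducibility along an intertwining order
isomorphism. -/
lemma irreducible_transfer {E₁ E₂ : Type*} [MeasurableSpace E₁] [MeasurableSpace E₂]
    (m₁ : Measure E₁) (m₂ : Measure E₂) [SigmaFinite m₁] [SigmaFinite m₂]
    (T₁ : ℝ≥0 → (Lp ℝ 2 m₁ →L[ℝ] Lp ℝ 2 m₁))
    (T₂ : ℝ≥0 → (Lp ℝ 2 m₂ →L[ℝ] Lp ℝ 2 m₂))
    (U : Lp ℝ 2 m₁ ≃ₗ[ℝ] Lp ℝ 2 m₂)
    (hU : ∀ f : Lp ℝ 2 m₁, 0 ≤ f ↔ 0 ≤ U f)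
    (hintertwine : ∀ t, ∀ f : Lp ℝ 2 m₁, U (T₁ t f) = T₂ t (U f)) :
    IsIrreducibleSemigroup m₂ T₂ → IsIrreducibleSemigroup m₁ T₁ := by
  classical
  intro h2 A hA hAinv
  -- U and U.symm are monotone
  have hU' : ∀ g : Lp ℝ 2 m₂, 0 ≤ U.symm g ↔ 0 ≤ g := by
    intro g
    have := hU (U.symm g)
    rwa [U.apply_symm_apply] at this
  have hmono : ∀ f g : Lp ℝ 2 m₁, f ≤ g → U f ≤ U g := by
    intro f g hfg
    have h0 : (0 : Lp ℝ 2 m₂) ≤ U g - U f := by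
      rw [← map_sub]
      exact (hU _).1 (sub_nonneg.2 hfg)
    exact sub_nonneg.1 h0
  have hmono' : ∀ f g : Lp ℝ 2 m₂, f ≤ g → U.symm f ≤ U.symm g := by
    intro f g hfg
    have h0 : (0 : Lp ℝ 2 m₁) ≤ U.symm g - U.symm f := by
      rw [← map_sub]
      exact (hU' _).2 (sub_nonneg.2 hfg)
    exact sub_nonneg.1 h0
  -- U is a lattice isomorphism
  have hsup : ∀ f g : Lp ℝ 2 m₁, U (f ⊔ g) = U f ⊔ U g := by
    intro f g
    refine le_antisymm ?_ (sup_le (hmono _ _ le_sup_left) (hmono _ _ le_sup_right))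
    have h1 : f ≤ U.symm (U f ⊔ U g) := by
      have := hmono' (U f) (U f ⊔ U g) le_sup_left
      rwa [U.symm_apply_apply] at this
    have h2 : g ≤ U.symm (U f ⊔ U g) := by
      have := hmono' (U g) (U f ⊔ U g) le_sup_right
      rwa [U.symm_apply_apply] at this
    have := hmono _ _ (sup_le h1 h2)
    rwa [U.apply_symm_apply] at this
  have hinf : ∀ f g : Lp ℝ 2 m₁, U (f ⊓ g) = U f ⊓ U g := by
    intro f g
    refine le_antisymm (le_inf (hmono _ _ inf_le_left) (hmono _ _ inf_le_right)) ?_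
    have h1 : U.symm (U f ⊓ U g) ≤ f := by
      have := hmono' (U f ⊓ U g) (U f) inf_le_left
      rwa [U.symm_apply_apply] at this
    have h2 : U.symm (U f ⊓ U g) ≤ g := by
      have := hmono' (U f ⊓ U g) (U g) inf_le_right
      rwa [U.symm_apply_apply] at this
    have := hmono _ _ (le_inf h1 h2)
    rwa [U.apply_symm_apply] at this
  have habs : ∀ f : Lp ℝ 2 m₁, U |f| = |U f| := by
    intro f
    have h1 : |f| = f ⊔ (-f) := rfl
    have h2 : |U f| = U f ⊔ (-(U f)) := rfl
    rw [h1, h2, hsup, map_neg]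
  have hdisj : ∀ a b : Lp ℝ 2 m₁, |a| ⊓ |b| = 0 → |U a| ⊓ |U b| = 0 := by
    intro a b h
    rw [← habs, ← habs, ← hinf, h, map_zero]
  -- positive L² elements
  obtain ⟨f₀, hf₀⟩ := exists_ae_pos_L2 m₁
  obtain ⟨g₀, hg₀⟩ := exists_ae_pos_L2 m₂
  -- indicator operators
  set QA : Lp ℝ 2 m₁ → Lp ℝ 2 m₁ :=
    fun f => ((Lp.memLp f).indicator hA).toLp (A.indicator ⇑f) with hQAdef
  set QC : Lp ℝ 2 m₁ → Lp ℝ 2 m₁ :=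
    fun f => ((Lp.memLp f).indicator hA.compl).toLp (Aᶜ.indicator ⇑f) with hQCdef
  have hQAcoe : ∀ f, ⇑(QA f) =ᵐ[m₁] A.indicator ⇑f := fun f => MemLp.coeFn_toLp _
  have hQCcoe : ∀ f, ⇑(QC f) =ᵐ[m₁] Aᶜ.indicator ⇑f := fun f => MemLp.coeFn_toLp _
  have hQsum : ∀ f, QA f + QC f = f := by
    intro f
    apply Lp.ext
    filter_upwards [Lp.coeFn_add (QA f) (QC f), hQAcoe f, hQCcoe f] with x h1 h2 h3
    rw [h1, Pi.add_apply, h2, h3]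
    exact Set.indicator_self_add_compl_apply A (⇑f) x
  have hQdisj : ∀ f g, |QA f| ⊓ |QC g| = (0 : Lp ℝ 2 m₁) := by
    intro f g
    apply Lp.ext
    filter_upwards [Lp.coeFn_inf |QA f| |QC g|, Lp.coeFn_abs (QA f), Lp.coeFn_abs (QC g),
      hQAcoe f, hQCcoe g, Lp.coeFn_zero ℝ 2 m₁] with x h1 h2 h3 h4 h5 h6
    rw [h1, Pi.inf_apply, h2, h3, h4, h5, h6, Pi.zero_apply]
    by_cases hx : x ∈ A
    · rw [Set.indicator_of_notMem (Set.notMem_compl_iff.2 hx), abs_zero]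
      exact inf_eq_right.2 (abs_nonneg _)
    · rw [Set.indicator_of_notMem hx, abs_zero]
      exact inf_eq_left.2 (abs_nonneg _)
  -- transported operators
  set P : Lp ℝ 2 m₂ → Lp ℝ 2 m₂ := fun g => U (QA (U.symm g)) with hPdef
  set PC : Lp ℝ 2 m₂ → Lp ℝ 2 m₂ := fun g => U (QC (U.symm g)) with hPCdef
  have hPsum : ∀ g, P g + PC g = g := by
    intro g
    rw [hPdef, hPCdef]
    simp only
    rw [← map_add, hQsum, U.apply_symm_apply]
  have hPdisj : ∀ g h, |P g| ⊓ |PC h| = (0 : Lp ℝ 2 m₂) := fun g h => hdisj _ _ (hQdisj _ _)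
  -- pointwise form of disjointness
  have hptdisj : ∀ u v : Lp ℝ 2 m₂, |u| ⊓ |v| = 0 → ∀ᵐ x ∂m₂, |u x| ⊓ |v x| = 0 := by
    intro u v h
    have h1 : ⇑(|u| ⊓ |v|) =ᵐ[m₂] ⇑|u| ⊓ ⇑|v| := Lp.coeFn_inf _ _
    rw [h] at h1
    filter_upwards [h1, Lp.coeFn_zero ℝ 2 m₂, Lp.coeFn_abs u, Lp.coeFn_abs v] with x e1 e2 e3 e4
    rw [Pi.inf_apply, e3, e4] at e1
    rw [← e1, e2, Pi.zero_apply]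
  -- the transported set A'
  set k : Lp ℝ 2 m₂ := P g₀ with hkdef
  set φ : E₂ → ℝ := (Lp.aestronglyMeasurable k).mk ⇑k with hφdef
  have hφmeas : StronglyMeasurable φ := (Lp.aestronglyMeasurable k).stronglyMeasurable_mk
  have hkφ : ⇑k =ᵐ[m₂] φ := (Lp.aestronglyMeasurable k).ae_eq_mk
  set A' : Set E₂ := {x | φ x ≠ 0} with hA'def
  have hA' : MeasurableSet A' := (hφmeas.measurable (measurableSet_singleton 0)).compl
  -- the key property: P is multiplication by the indicator of A'
  have hP : ∀ g : Lp ℝ 2 m₂, ⇑(P g) =ᵐ[m₂] A'.indicator ⇑g := by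
    intro g
    have hg_sum : ⇑g =ᵐ[m₂] ⇑(P g) + ⇑(PC g) := by
      conv_lhs => rw [← hPsum g]
      exact Lp.coeFn_add _ _
    have hg0_sum : ⇑g₀ =ᵐ[m₂] ⇑k + ⇑(PC g₀) := by
      conv_lhs => rw [← hPsum g₀]
      exact Lp.coeFn_add _ _
    have hd1 := hptdisj _ _ (hPdisj g g₀)
    have hd2 := hptdisj _ _ (hPdisj g₀ g)
    filter_upwards [hg_sum, hg0_sum, hd1, hd2, hkφ, hg₀] with x e1 e2 e3 e4 e5 e6
    rw [Pi.add_apply] at e1 e2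
    by_cases hx : φ x = 0
    · rw [Set.indicator_of_notMem (by simpa [hA'def] using hx)]
      have hk0 : (k : E₂ → ℝ) x = 0 := e5.trans hx
      have hPC0 : (PC g₀ : E₂ → ℝ) x ≠ 0 := by
        rw [hk0, zero_add] at e2
        rw [← e2]
        exact ne_of_gt e6
      exact abs_inf_zero e3 hPC0
    · rw [Set.indicator_of_mem (by simpa [hA'def] using hx)]
      have hkne : (k : E₂ → ℝ) x ≠ 0 := by rw [e5]; exact hx
      rw [inf_comm] at e4
      have hPCg0 : (PC g : E₂ → ℝ) x = 0 := abs_inf_zero e4 hkne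
      rw [e1, hPCg0, add_zero]
  -- A' is invariant for T₂
  have hA'inv : IsInvariantSet m₂ T₂ A' := by
    intro t h h' hh'
    have hh'eq : h' = P h := Lp.ext (hh'.trans (hP h).symm)
    have hcomm : ∀ (s : ℝ≥0) f, T₁ s (QA f) = QA (T₁ s f) := by
      intro s f
      apply Lp.ext
      exact (hAinv s f (QA f) (hQAcoe f)).trans (hQAcoe (T₁ s f)).symm
    have hsymmT : U.symm (T₂ t h) = T₁ t (U.symm h) := by
      apply U.injective
      rw [U.apply_symm_apply, hintertwine, U.apply_symm_apply]
    have hTP : T₂ t h' = P (T₂ t h) := by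
      rw [hh'eq, hPdef]
      simp only
      rw [← hintertwine, hcomm, hsymmT]
    rw [hTP]
    exact hP _
  -- conclude using irreducibility of T₂
  have hPf₀ : P (U f₀) = U (QA f₀) := by
    rw [hPdef]
    simp only
    rw [U.symm_apply_apply]
  rcases h2 A' hA' hA'inv with h | h
  · left
    have hA'ae : ∀ᵐ x ∂m₂, x ∉ A' := measure_eq_zero_iff_ae_notMem.1 h
    have hQA0 : QA f₀ = 0 := by
      apply U.injective
      rw [map_zero, ← hPf₀]
      apply Lp.ext
      filter_upwards [hP (U f₀), hA'ae, Lp.coeFn_zero ℝ 2 m₂] with x e1 e2 e3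
      rw [e1, e3, Pi.zero_apply]
      exact Set.indicator_of_notMem e2 _
    have hind : A.indicator ⇑f₀ =ᵐ[m₁] fun _ => (0 : ℝ) := by
      have h1 := (hQAcoe f₀).symm
      rw [hQA0] at h1
      filter_upwards [h1, Lp.coeFn_zero ℝ 2 m₁] with x e1 e2
      rw [e1, e2, Pi.zero_apply]
    rw [measure_eq_zero_iff_ae_notMem]
    filter_upwards [hind, hf₀] with x e1 e2
    intro hxA
    rw [Set.indicator_of_mem hxA] at e1
    exact absurd e1 (ne_of_gt e2)
  · right
    have hA'ae : ∀ᵐ x ∂m₂, x ∈ A' := by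
      have := measure_eq_zero_iff_ae_notMem.1 h
      filter_upwards [this] with x hx
      simpa using hx
    have hQAid : QA f₀ = f₀ := by
      apply U.injective
      rw [← hPf₀]
      apply Lp.ext
      filter_upwards [hP (U f₀), hA'ae] with x e1 e2
      rw [e1]
      exact Set.indicator_of_mem e2 _
    have hind : A.indicator ⇑f₀ =ᵐ[m₁] ⇑f₀ := by
      have h1 := (hQAcoe f₀).symm
      rwa [hQAid] at h1
    rw [measure_eq_zero_iff_ae_notMem]
    filter_upwards [hind, hf₀] with x e1 e2
    intro hxAc
    rw [Set.indicator_of_notMem hxAc] at e1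
    exact absurd e1.symm (ne_of_gt e2)

/-- If an order isomorphism `U` intertwines the semigroups `T¹_t` and `T²_t`, then
`T¹_t` is irreducible if and only if `T²_t` is irreducible. -/
theorem stmt_10 {E₁ E₂ : Type*} [MeasurableSpace E₁] [StandardBorelSpace E₁]
    [MeasurableSpace E₂] [StandardBorelSpace E₂]
    (m₁ : Measure E₁) (m₂ : Measure E₂) [SigmaFinite m₁] [SigmaFinite m₂]
    (T₁ : ℝ≥0 → (Lp ℝ 2 m₁ →L[ℝ] Lp ℝ 2 m₁))
    (T₂ : ℝ≥0 → (Lp ℝ 2 m₂ →L[ℝ] Lp ℝ 2 m₂))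
    (U : Lp ℝ 2 m₁ ≃ₗ[ℝ] Lp ℝ 2 m₂)
    (hU : ∀ f : Lp ℝ 2 m₁, 0 ≤ f ↔ 0 ≤ U f)
    (hintertwine : ∀ t, ∀ f : Lp ℝ 2 m₁, U (T₁ t f) = T₂ t (U f)) :
    IsIrreducibleSemigroup m₁ T₁ ↔ IsIrreducibleSemigroup m₂ T₂ := by
  have hU' : ∀ g : Lp ℝ 2 m₂, 0 ≤ g ↔ 0 ≤ U.symm g := by
    intro g
    have := hU (U.symm g)
    rw [U.apply_symm_apply] at this
    exact this.symm
  have hint' : ∀ t, ∀ g : Lp ℝ 2 m₂, U.symm (T₂ t g) = T₁ t (U.symm g) := by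
    intro t g
    apply U.injective
    rw [U.apply_symm_apply, hintertwine, U.apply_symm_apply]
  constructor
  · intro h1
    exact irreducible_transfer m₂ m₁ T₂ T₁ U.symm hU' hint' h1
  · intro h2
    exact irreducible_transfer m₁ m₂ T₁ T₂ U hU hintertwine h2
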